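/- Let Ω be a finite sample space with probability measure Pr, let E be an event, and let A₁,…,Aₙ be pairwise disjoint events whose union contains E. Define Eᵢ = E ∩ Aᵢ and define the random variable Y(ω) = Pr[Eᵢ]/Pr[Aᵢ] for ω ∈ Eᵢ (and Y(ω)=0 for ω outside E). Then Pr[E | A₁ ∪ ⋯ ∪ Aₙ] ≤ E[Y | E]. -/

import Mathlib

/-- Lemma 1 (conditional-probability lower bound): for a finite probability space with
nonnegative weights `w`, an event `E`, and pairwise disjoint events `A i` whose union
contains `E`, the conditional probability of `E` given `⋃ i, A i` is at most the
conditional expectation given `E` of the random variable `Y(ω) = Pr[E ∩ A i]/Pr[A i]`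
(for `ω ∈ E ∩ A i`), which equals `∑ i, Pr[E ∩ A i]² / (Pr[A i] · Pr[E])`. -/
theorem stmt_0 {Ω : Type*} [Fintype Ω] [DecidableEq Ω] (w : Ω → ℝ) (hw : ∀ ω, 0 ≤ w ω)
    (n : ℕ) (E : Finset Ω) (A : Fin n → Finset Ω)
    (hdisj : ∀ i j, i ≠ j → Disjoint (A i) (A j))
    (hsub : E ⊆ Finset.univ.biUnion A)
    (hA : ∀ i, 0 < ∑ ω ∈ A i, w ω)
    (hE : 0 < ∑ ω ∈ E, w ω) :
    (∑ ω ∈ E, w ω) / (∑ ω ∈ Finset.univ.biUnion A, w ω) ≤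
      ∑ i, (∑ ω ∈ E ∩ A i, w ω) ^ 2 / ((∑ ω ∈ A i, w ω) * (∑ ω ∈ E, w ω)) := by
  set e : Fin n → ℝ := fun i => ∑ ω ∈ E ∩ A i, w ω with he
  set a : Fin n → ℝ := fun i => ∑ ω ∈ A i, w ω with ha
  have hAsum : ∑ ω ∈ Finset.univ.biUnion A, w ω = ∑ i, a i := by
    rw [Finset.sum_biUnion]
    intro i _ j _ hij
    exact hdisj i j hij
  have hEeq : E = Finset.univ.biUnion (fun i => E ∩ A i) := by
    ext ω
    simp only [Finset.mem_biUnion, Finset.mem_inter, Finset.mem_univ, true_and]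
    constructor
    · intro hω
      obtain ⟨i, _, hi⟩ := Finset.mem_biUnion.1 (hsub hω)
      exact ⟨i, hω, hi⟩
    · rintro ⟨i, hω, _⟩; exact hω
  have hEsum : ∑ ω ∈ E, w ω = ∑ i, e i := by
    conv_lhs => rw [hEeq]
    rw [Finset.sum_biUnion]
    intro i _ j _ hij
    exact Finset.disjoint_of_subset_left Finset.inter_subset_right
      (Finset.disjoint_of_subset_right Finset.inter_subset_right (hdisj i j hij))
  have key : (∑ i, e i) ^ 2 / ∑ i, a i ≤ ∑ i, e i ^ 2 / a i :=
    Finset.sq_sum_div_le_sum_sq_div _ e (fun i _ => hA i)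
  have hrw : ∀ i, e i ^ 2 / (a i * ∑ ω ∈ E, w ω) = (e i ^ 2 / a i) / ∑ ω ∈ E, w ω := by
    intro i; rw [div_div]
  calc (∑ ω ∈ E, w ω) / (∑ ω ∈ Finset.univ.biUnion A, w ω)
      = ((∑ i, e i) ^ 2 / ∑ i, a i) / ∑ ω ∈ E, w ω := by
        rw [hAsum, hEsum]
        have hEne : (∑ i, e i) ≠ 0 := by rw [← hEsum]; exact hE.ne'
        rw [sq]
        field_simp
    _ ≤ (∑ i, e i ^ 2 / a i) / ∑ ω ∈ E, w ω := by
        exact div_le_div_of_nonneg_right key hE.le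
    _ = ∑ i, e i ^ 2 / (a i * ∑ ω ∈ E, w ω) := by
        rw [Finset.sum_div]; exact Finset.sum_congr rfl fun i _ => (hrw i).symm
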